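/- For every w ∈ S_n and every i with 1 ≤ i ≤ n−1: δ_i p_w = p_{s_i w} if ℓ(s_i w) < ℓ(w) and δ_i p_w = 0 otherwise; and ∂_i p_w = p_{w s_i} if ℓ(w s_i) < ℓ(w) and ∂_i p_w = 0 otherwise. -/

import Mathlib

open MvPolynomial Equiv Finset

noncomputable section

/-- The polynomial ring ℂ[t₁,…,tₙ]. -/
abbrev Pol (n : ℕ) : Type := MvPolynomial (Fin n) ℂ

/-- The action of a permutation `w` on polynomials by the substitution `tᵢ ↦ t_{w(i)}`. -/
def pact {n : ℕ} (w : Perm (Fin n)) (f : Pol n) : Pol n := rename ⇑w f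

/-- The GKM condition defining `R ⊆ ∏_{v ∈ Sₙ} ℂ[t₁,…,tₙ]`: for every `v` and every
transposition `(i j)` with `i < j`, the difference `p(v) − p((i j)v)` is divisible by
`tᵢ − tⱼ`. -/
def GKM (n : ℕ) (p : Perm (Fin n) → Pol n) : Prop :=
  ∀ (v : Perm (Fin n)) (i j : Fin n), i < j →
    (X i - X j : Pol n) ∣ (p v - p (Equiv.swap i j * v))

/-- The length of a permutation: its number of inversions. -/
def len {n : ℕ} (w : Perm (Fin n)) : ℕ :=
  (Finset.univ.filter fun q : Fin n × Fin n => q.1 < q.2 ∧ w q.2 < w q.1).card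

/-- Bruhat order: the partial order generated by `u < (i j) u` whenever `ℓ(u) < ℓ((i j)u)`. -/
def bruhatLE {n : ℕ} : Perm (Fin n) → Perm (Fin n) → Prop :=
  Relation.ReflTransGen
    (fun u v => (∃ i j : Fin n, i < j ∧ v = Equiv.swap i j * u) ∧ len u < len v)

/-- `p` is the canonical class (equivariant Schubert class) of `w`:
(i) each component is homogeneous of degree `ℓ(w)`; (ii) `p(v) = 0` unless `v ≥ w` in
Bruhat order; (iii) `p(w) = ∏ (tᵢ − tⱼ)` over pairs `i < j` with `ℓ((i j)w) < ℓ(w)`;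
and `p` satisfies the GKM conditions. -/
def IsCanonical {n : ℕ} (w : Perm (Fin n)) (p : Perm (Fin n) → Pol n) : Prop :=
  GKM n p ∧
  (∀ v, (p v).IsHomogeneous (len w)) ∧
  (∀ v, ¬ bruhatLE w v → p v = 0) ∧
  p w = ∏ q ∈ Finset.univ.filter
      (fun q : Fin n × Fin n => q.1 < q.2 ∧ len (Equiv.swap q.1 q.2 * w) < len w),
      (X q.1 - X q.2 : Pol n)

/-- The simple transposition `sᵢ = (i, i+1)`. -/
def sT (n i : ℕ) (h : i + 1 < n) : Perm (Fin n) :=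
  Equiv.swap ⟨i, Nat.lt_of_succ_lt h⟩ ⟨i + 1, h⟩

/-- The dot (left) action: `(w·p)(v) = w(p(w⁻¹ v))`. -/
def dot {n : ℕ} (w : Perm (Fin n)) (p : Perm (Fin n) → Pol n) : Perm (Fin n) → Pol n :=
  fun v => pact w (p (w⁻¹ * v))

/-- The star (right) action: `(p * w)(v) = p(vw)`. -/
def starAct {n : ℕ} (p : Perm (Fin n) → Pol n) (w : Perm (Fin n)) :
    Perm (Fin n) → Pol n :=
  fun v => p (v * w)

/-- `R` as a `ℂ[t₁,…,tₙ]`-submodule of the product. -/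
def gkmSubmodule (n : ℕ) : Submodule (Pol n) (Perm (Fin n) → Pol n) where
  carrier := {p | GKM n p}
  add_mem' := by
    intro a b ha hb v i j hij
    have h := dvd_add (ha v i j hij) (hb v i j hij)
    simpa [Pi.add_apply, add_sub_add_comm] using h
  zero_mem' := by
    intro v i j hij
    simp
  smul_mem' := by
    intro c p hp v i j hij
    have h := (hp v i j hij).mul_left c
    simpa [Pi.smul_apply, smul_eq_mul, mul_sub] using h

/-- The maximal ideal `𝔪 = (t₁,…,tₙ) ⊆ ℂ[t₁,…,tₙ]`. -/
def mIdeal (n : ℕ) : Ideal (Pol n) := Ideal.span (Set.range (X : Fin n → Pol n))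

/-- The submodule `𝔪R`: finite sums of products `c • p` with `c ∈ 𝔪` and `p ∈ R`. -/
def mR (n : ℕ) : Submodule (Pol n) (Perm (Fin n) → Pol n) :=
  Submodule.span (Pol n) {q | ∃ c ∈ mIdeal n, ∃ p, GKM n p ∧ q = c • p}


section Combinatorics
variable {n : ℕ}

/-- order behaviour of an adjacent swap -/
lemma swap_lt_swap_iff {i j x y : Fin n} (hij : (j : ℕ) = (i : ℕ) + 1)
    (h1 : ¬ (x = i ∧ y = j)) (h2 : ¬ (x = j ∧ y = i)) :
    Equiv.swap i j x < Equiv.swap i j y ↔ x < y := by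
  rw [Equiv.swap_apply_def, Equiv.swap_apply_def]
  simp only [Fin.ext_iff] at h1 h2
  simp only [Fin.lt_def] at h1 h2 ⊢
  split_ifs with a b c d <;>
    simp only [Fin.lt_def, Fin.ext_iff] at * <;> omega

/-- the inversion set -/
def invSet (u : Perm (Fin n)) : Finset (Fin n × Fin n) :=
  Finset.univ.filter fun q : Fin n × Fin n => q.1 < q.2 ∧ u q.2 < u q.1

lemma len_eq_card (u : Perm (Fin n)) : len u = (invSet u).card := rfl

lemma mem_invSet {u : Perm (Fin n)} {q : Fin n × Fin n} :
    q ∈ invSet u ↔ q.1 < q.2 ∧ u q.2 < u q.1 := by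
  simp [invSet]

end Combinatorics

section AdjLen
variable {n : ℕ}

lemma len_adj_left {i j : Fin n} (hij : (j : ℕ) = (i : ℕ) + 1) (u : Perm (Fin n)) :
    (u⁻¹ i < u⁻¹ j → len (Equiv.swap i j * u) = len u + 1) ∧
    (u⁻¹ j < u⁻¹ i → len (Equiv.swap i j * u) + 1 = len u) := by
  have key : ∀ k l : Fin n, ¬(k = u⁻¹ i ∧ l = u⁻¹ j) → ¬(k = u⁻¹ j ∧ l = u⁻¹ i) →
      ((Equiv.swap i j * u) l < (Equiv.swap i j * u) k ↔ u l < u k) := by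
    intro k l h1 h2
    simp only [Equiv.Perm.mul_apply]
    refine swap_lt_swap_iff hij ?_ ?_
    · rintro ⟨e1, e2⟩
      exact h2 ⟨by rw [← e2]; simp, by rw [← e1]; simp⟩
    · rintro ⟨e1, e2⟩
      exact h1 ⟨by rw [← e2]; simp, by rw [← e1]; simp⟩
  constructor
  · intro hA
    have hmem : (u⁻¹ i, u⁻¹ j) ∉ invSet u := by
      rw [mem_invSet]
      simp only [Equiv.Perm.coe_inv, Equiv.apply_symm_apply]
      rw [Fin.lt_def (a := j)]
      omega
    have hset : invSet (Equiv.swap i j * u) = insert (u⁻¹ i, u⁻¹ j) (invSet u) := by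
      ext q
      obtain ⟨k, l⟩ := q
      rw [Finset.mem_insert, mem_invSet, mem_invSet]
      by_cases hq : (k, l) = (u⁻¹ i, u⁻¹ j)
      · rw [Prod.ext_iff] at hq
        obtain ⟨rfl, rfl⟩ := hq
        constructor
        · intro _; exact Or.inl rfl
        · intro _
          refine ⟨hA, ?_⟩
          simp only [Equiv.Perm.mul_apply, Equiv.Perm.coe_inv, Equiv.apply_symm_apply,
            Equiv.swap_apply_left, Equiv.swap_apply_right]
          rw [Fin.lt_def]; omega
      · constructor
        · rintro ⟨hkl, hlt⟩
          have hq2 : ¬(k = u⁻¹ j ∧ l = u⁻¹ i) := by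
            rintro ⟨rfl, rfl⟩
            exact absurd (hA.trans hkl) (lt_irrefl _)
          have hq1 : ¬(k = u⁻¹ i ∧ l = u⁻¹ j) := by
            rintro ⟨rfl, rfl⟩; exact hq rfl
          exact Or.inr ⟨hkl, (key k l hq1 hq2).mp hlt⟩
        · rintro (h | ⟨hkl, hlt⟩)
          · exact absurd h hq
          · have hq2 : ¬(k = u⁻¹ j ∧ l = u⁻¹ i) := by
              rintro ⟨rfl, rfl⟩
              exact absurd (hA.trans hkl) (lt_irrefl _)
            have hq1 : ¬(k = u⁻¹ i ∧ l = u⁻¹ j) := by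
              rintro ⟨rfl, rfl⟩; exact hq rfl
            exact ⟨hkl, (key k l hq1 hq2).mpr hlt⟩
    rw [len_eq_card, len_eq_card, hset, Finset.card_insert_of_notMem hmem]
  · intro hB
    have hmem : (u⁻¹ j, u⁻¹ i) ∈ invSet u := by
      rw [mem_invSet]
      simp only [Equiv.Perm.coe_inv, Equiv.apply_symm_apply]
      exact ⟨hB, by rw [Fin.lt_def]; omega⟩
    have hset : invSet (Equiv.swap i j * u) = (invSet u).erase (u⁻¹ j, u⁻¹ i) := by
      ext q
      obtain ⟨k, l⟩ := q
      rw [Finset.mem_erase, mem_invSet, mem_invSet]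
      by_cases hq : (k, l) = (u⁻¹ j, u⁻¹ i)
      · rw [Prod.ext_iff] at hq
        obtain ⟨rfl, rfl⟩ := hq
        simp only [ne_eq, not_true_eq_false, false_and, iff_false, not_and]
        intro _
        simp only [Equiv.Perm.mul_apply, Equiv.Perm.coe_inv, Equiv.apply_symm_apply,
          Equiv.swap_apply_left, Equiv.swap_apply_right]
        rw [Fin.lt_def, not_lt]; omega
      · constructor
        · rintro ⟨hkl, hlt⟩
          have hq2 : ¬(k = u⁻¹ j ∧ l = u⁻¹ i) := by
            rintro ⟨rfl, rfl⟩; exact hq rfl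
          have hq1 : ¬(k = u⁻¹ i ∧ l = u⁻¹ j) := by
            rintro ⟨rfl, rfl⟩
            exact absurd (hB.trans hkl) (lt_irrefl _)
          exact ⟨by simpa using hq, hkl, (key k l hq1 hq2).mp hlt⟩
        · rintro ⟨-, hkl, hlt⟩
          have hq2 : ¬(k = u⁻¹ j ∧ l = u⁻¹ i) := by
            rintro ⟨rfl, rfl⟩; exact hq rfl
          have hq1 : ¬(k = u⁻¹ i ∧ l = u⁻¹ j) := by
            rintro ⟨rfl, rfl⟩
            exact absurd (hB.trans hkl) (lt_irrefl _)
          exact ⟨hkl, (key k l hq1 hq2).mpr hlt⟩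
    rw [len_eq_card, len_eq_card, hset, Finset.card_erase_of_mem hmem]
    have : 0 < (invSet u).card := Finset.card_pos.mpr ⟨_, hmem⟩
    omega

end AdjLen

section AdjRight
variable {n : ℕ}

lemma len_adj_right {i j : Fin n} (hij : (j : ℕ) = (i : ℕ) + 1) (u : Perm (Fin n)) :
    (u i < u j → len (u * Equiv.swap i j) = len u + 1) ∧
    (u j < u i → len (u * Equiv.swap i j) + 1 = len u) := by
  have hijlt : i < j := by rw [Fin.lt_def]; omega
  set s := Equiv.swap i j with hs
  have happ : ∀ x, (u * s) x = u (s x) := fun x => rfl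
  have hmap : ∀ (a b : Perm (Fin n)), (∀ x, b x = a (s x)) →
      ∀ q ∈ (invSet b).erase (i, j), (s q.1, s q.2) ∈ (invSet a).erase (i, j) := by
    intro a b hba q hq
    obtain ⟨k, l⟩ := q
    rw [Finset.mem_erase, mem_invSet] at hq
    obtain ⟨hne, hkl, hlt⟩ := hq
    dsimp only at hkl hlt
    have h1 : ¬(k = i ∧ l = j) := by
      rintro ⟨rfl, rfl⟩; exact hne rfl
    have h2 : ¬(k = j ∧ l = i) := by
      rintro ⟨rfl, rfl⟩; exact absurd (hijlt.trans hkl) (lt_irrefl _)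
    rw [Finset.mem_erase, mem_invSet]
    dsimp only
    refine ⟨?_, (swap_lt_swap_iff hij h1 h2).mpr hkl, ?_⟩
    · rintro h
      rw [Prod.ext_iff] at h
      obtain ⟨e1, e2⟩ := h
      dsimp only at e1 e2
      have e1' : k = s i := by rw [← e1, hs]; simp
      have e2' : l = s j := by rw [← e2, hs]; simp
      rw [Equiv.swap_apply_left] at e1'
      rw [Equiv.swap_apply_right] at e2'
      subst e1'; subst e2'
      exact absurd (hijlt.trans hkl) (lt_irrefl _)
    · rw [← hba l, ← hba k]
      exact hlt
  have hcard : ((invSet (u * s)).erase (i, j)).card = ((invSet u).erase (i, j)).card := by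
    refine Finset.card_nbij' (fun q => (s q.1, s q.2)) (fun q => (s q.1, s q.2))
      (hmap u (u * s) happ) (hmap (u * s) u ?_) ?_ ?_
    · intro x
      rw [happ, hs, Equiv.swap_apply_self]
    · intro q _; simp [hs, Equiv.swap_apply_self]
    · intro q _; simp [hs, Equiv.swap_apply_self]
  have hone : ((i, j) ∈ invSet (u * s)) ↔ u i < u j := by
    rw [mem_invSet]
    simp only [happ, hs, Equiv.Perm.mul_apply, Equiv.swap_apply_left, Equiv.swap_apply_right]
    exact ⟨fun h => h.2, fun h => ⟨hijlt, h⟩⟩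
  have htwo : ((i, j) ∈ invSet u) ↔ u j < u i := by
    rw [mem_invSet]
    exact ⟨fun h => h.2, fun h => ⟨hijlt, h⟩⟩
  constructor
  · intro hA
    have m1 : (i, j) ∈ invSet (u * s) := hone.mpr hA
    have m2 : (i, j) ∉ invSet u := by
      rw [htwo]; exact fun h => absurd (hA.trans h) (lt_irrefl _)
    rw [len_eq_card, len_eq_card]
    have e2 : (invSet u).erase (i, j) = invSet u := Finset.erase_eq_of_notMem m2
    rw [e2] at hcard
    have := Finset.card_erase_of_mem m1
    have hpos : 0 < (invSet (u * s)).card := Finset.card_pos.mpr ⟨_, m1⟩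
    omega
  · intro hB
    have m1 : (i, j) ∉ invSet (u * s) := by
      rw [hone]; exact fun h => absurd (hB.trans h) (lt_irrefl _)
    have m2 : (i, j) ∈ invSet u := htwo.mpr hB
    rw [len_eq_card, len_eq_card]
    have e1 : (invSet (u * s)).erase (i, j) = invSet (u * s) := Finset.erase_eq_of_notMem m1
    rw [e1] at hcard
    have := Finset.card_erase_of_mem m2
    have hpos : 0 < (invSet u).card := Finset.card_pos.mpr ⟨_, m2⟩
    omega

end AdjRight

section LenInv
variable {n : ℕ}

lemma len_inv (u : Perm (Fin n)) : len u⁻¹ = len u := by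
  rw [len_eq_card, len_eq_card]
  refine Finset.card_nbij' (fun q => (u⁻¹ q.2, u⁻¹ q.1)) (fun q => (u q.2, u q.1))
    ?_ ?_ ?_ ?_
  · intro q hq
    rw [Finset.mem_coe, mem_invSet] at hq ⊢
    simp only [Equiv.Perm.coe_inv, Equiv.apply_symm_apply]
    exact ⟨hq.2, hq.1⟩
  · intro q hq
    rw [Finset.mem_coe, mem_invSet] at hq ⊢
    simp only [Equiv.Perm.coe_inv, Equiv.symm_apply_apply]
    exact ⟨hq.2, hq.1⟩
  · intro q _; simp
  · intro q _; simp

end LenInv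

section F1
variable {n : ℕ}

lemma len_swap_lt_aux : ∀ (g : ℕ) (a b : Fin n) (w : Perm (Fin n)), a < b →
    (b : ℕ) - (a : ℕ) = g → w⁻¹ b < w⁻¹ a → len (Equiv.swap a b * w) < len w := by
  intro g
  induction g using Nat.strong_induction_on with
  | _ g IH =>
    intro a b w hab hg hw
    by_cases hadj : (b : ℕ) = (a : ℕ) + 1
    · have := (len_adj_left hadj w).2 hw
      omega
    · have habn : (a : ℕ) < (b : ℕ) := hab
      set c : Fin n := ⟨(b : ℕ) - 1, by omega⟩ with hc
      have hcv : (c : ℕ) = (b : ℕ) - 1 := rfl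
      have hcb : (b : ℕ) = (c : ℕ) + 1 := by omega
      have hac : a < c := by rw [Fin.lt_def]; omega
      have hcbne : c ≠ b := by intro h; rw [h] at hcb; omega
      have habne : a ≠ b := Fin.ne_of_lt hab
      have hacne : a ≠ c := Fin.ne_of_lt hac
      set f := Equiv.swap c b with hf
      have hid : Equiv.swap a b = f * Equiv.swap a c * f := by
        have h1 : f a = a := Equiv.swap_apply_of_ne_of_ne hacne habne
        have h2 : f c = b := Equiv.swap_apply_left c b
        have := Equiv.swap_apply_apply f a c
        rw [h1, h2] at this
        rw [this, hf, Equiv.swap_inv]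
      set w₁ := f * w with hw1
      set w₂ := Equiv.swap a c * w₁ with hw2
      have hgoal : Equiv.swap a b * w = f * w₂ := by
        rw [hid, hw2, hw1]; group
      rw [hgoal]
      have e1 : w₁⁻¹ a = w⁻¹ a := by
        rw [hw1, mul_inv_rev]
        simp only [Equiv.Perm.mul_apply, hf, Equiv.swap_inv]
        rw [Equiv.swap_apply_of_ne_of_ne hacne habne]
      have e2 : w₁⁻¹ c = w⁻¹ b := by
        rw [hw1, mul_inv_rev]
        simp only [Equiv.Perm.mul_apply, hf, Equiv.swap_inv]
        rw [Equiv.swap_apply_left]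
      have e3 : w₁⁻¹ b = w⁻¹ c := by
        rw [hw1, mul_inv_rev]
        simp only [Equiv.Perm.mul_apply, hf, Equiv.swap_inv]
        rw [Equiv.swap_apply_right]
      have e4 : w₂⁻¹ c = w₁⁻¹ a := by
        rw [hw2, mul_inv_rev]
        simp only [Equiv.Perm.mul_apply, Equiv.swap_inv]
        rw [Equiv.swap_apply_right]
      have e5 : w₂⁻¹ b = w₁⁻¹ b := by
        rw [hw2, mul_inv_rev]
        simp only [Equiv.Perm.mul_apply, Equiv.swap_inv]
        rw [Equiv.swap_apply_of_ne_of_ne habne.symm hcbne.symm]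
      -- step 2 : len w₂ < len w₁
      have step2 : len w₂ < len w₁ := by
        refine IH ((c : ℕ) - (a : ℕ)) (by omega) a c w₁ hac rfl ?_
        rw [e1, e2]; exact hw
      -- adjacent lemmas
      have adj1 := len_adj_left (u := w) (i := c) (j := b) hcb
      have adj3 := len_adj_left (u := w₂) (i := c) (j := b) hcb
      have hpcpb : w⁻¹ c ≠ w⁻¹ b := fun h => hcbne (w⁻¹.injective h)
      have hpcpa : w⁻¹ c ≠ w⁻¹ a := fun h => hacne (w⁻¹.injective h).symm
      rcases lt_or_gt_of_ne hpcpb with h1 | h1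
      · -- pc < pb (< pa) : len w₁ = len w + 1
        have s1 : len w₁ = len w + 1 := adj1.1 h1
        have s3 : len (f * w₂) + 1 = len w₂ := by
          refine adj3.2 ?_
          rw [e5, e4, e3, e1]
          exact h1.trans hw
        omega
      · -- pb < pc : len w₁ + 1 = len w
        have s1 : len w₁ + 1 = len w := adj1.2 h1
        rcases lt_or_gt_of_ne hpcpa with h2 | h2
        · have s3 : len (f * w₂) + 1 = len w₂ := by
            refine adj3.2 ?_
            rw [e5, e4, e3, e1]
            exact h2
          omega
        · have s3 : len (f * w₂) = len w₂ + 1 := by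
            refine adj3.1 ?_
            rw [e5, e4, e3, e1]
            exact h2
          omega

lemma len_swap_lt_iff {a b : Fin n} (hab : a < b) (w : Perm (Fin n)) :
    len (Equiv.swap a b * w) < len w ↔ w⁻¹ b < w⁻¹ a := by
  constructor
  · intro h
    by_contra hcon
    have hne : w⁻¹ a ≠ w⁻¹ b := fun h' => (Fin.ne_of_lt hab) (w⁻¹.injective h')
    have hlt : w⁻¹ a < w⁻¹ b := by
      rcases lt_or_gt_of_ne hne with h' | h'
      · exact h'
      · exact absurd h' hcon
    have : len (Equiv.swap a b * (Equiv.swap a b * w)) < len (Equiv.swap a b * w) := by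
      refine len_swap_lt_aux ((b : ℕ) - (a : ℕ)) a b _ hab rfl ?_
      rw [mul_inv_rev, Equiv.swap_inv]
      simp only [Equiv.Perm.mul_apply]
      rw [Equiv.swap_apply_right, Equiv.swap_apply_left]
      exact hlt
    rw [← mul_assoc, Equiv.swap_mul_self, one_mul] at this
    omega
  · exact len_swap_lt_aux ((b : ℕ) - (a : ℕ)) a b w hab rfl

end F1

section Lowering
variable {n : ℕ}

lemma lowering_eq (w : Perm (Fin n)) :
    (Finset.univ.filter fun q : Fin n × Fin n =>
        q.1 < q.2 ∧ len (Equiv.swap q.1 q.2 * w) < len w) = invSet w⁻¹ := by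
  ext q
  rw [Finset.mem_filter, mem_invSet]
  constructor
  · rintro ⟨-, h1, h2⟩
    exact ⟨h1, (len_swap_lt_iff h1 w).mp h2⟩
  · rintro ⟨h1, h2⟩
    exact ⟨Finset.mem_univ _, h1, (len_swap_lt_iff h1 w).mpr h2⟩

lemma card_lowering (w : Perm (Fin n)) :
    (Finset.univ.filter fun q : Fin n × Fin n =>
        q.1 < q.2 ∧ len (Equiv.swap q.1 q.2 * w) < len w).card = len w := by
  rw [lowering_eq, ← len_eq_card, len_inv]

lemma bruhat_len_mono {u v : Perm (Fin n)} (h : bruhatLE u v) : u = v ∨ len u < len v := by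
  induction h with
  | refl => exact Or.inl rfl
  | tail h1 h2 ih =>
    rcases ih with rfl | ih
    · exact Or.inr h2.2
    · exact Or.inr (ih.trans h2.2)

lemma not_bruhat_of_len_le {u v : Perm (Fin n)} (h : len v ≤ len u) (hne : v ≠ u) :
    ¬ bruhatLE u v := by
  intro hb
  rcases bruhat_len_mono hb with rfl | hlt
  · exact hne rfl
  · omega

end Lowering

section PrimeLemmas
variable {n : ℕ}

lemma prime_X_sub_X {a b : Fin n} (hab : a ≠ b) : Prime (X a - X b : Pol n) := by
  classical
  let E1 : MvPolynomial (Fin n) ℂ ≃ₐ[ℂ] MvPolynomial (Option {x : Fin n // x ≠ b}) ℂ :=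
    renameEquiv ℂ (Equiv.optionSubtypeNe b).symm
  let E2 := optionEquivLeft ℂ {x : Fin n // x ≠ b}
  let E := E1.trans E2
  rw [← MulEquiv.prime_iff E]
  have hE : E (X a - X b) = Polynomial.C (X ⟨a, hab⟩) - Polynomial.X := by
    show E2 (E1 (X a - X b)) = _
    rw [map_sub, map_sub]
    have h1 : E1 (X a) = X ((Equiv.optionSubtypeNe b).symm a) := by
      simp [E1, renameEquiv_apply, rename_X]
    have h2 : E1 (X b) = X ((Equiv.optionSubtypeNe b).symm b) := by
      simp [E1, renameEquiv_apply, rename_X]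
    rw [h1, h2, Equiv.optionSubtypeNe_symm_self, Equiv.optionSubtypeNe_symm_of_ne hab]
    rw [optionEquivLeft_X_some, optionEquivLeft_X_none]
  show Prime (E (X a - X b))
  rw [hE]
  have hprime := Polynomial.prime_X_sub_C (R := MvPolynomial {x : Fin n // x ≠ b} ℂ)
    (X ⟨a, hab⟩)
  have hneg : Polynomial.C (X ⟨a, hab⟩ : MvPolynomial {x : Fin n // x ≠ b} ℂ) - Polynomial.X
      = -(Polynomial.X - Polynomial.C (X ⟨a, hab⟩)) := by ring
  rw [hneg]
  exact hprime.neg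

lemma X_sub_X_ne_zero {a b : Fin n} (hab : a ≠ b) : (X a - X b : Pol n) ≠ 0 :=
  (prime_X_sub_X hab).ne_zero

lemma not_dvd_X_sub_X {a b c d : Fin n} (hab : a < b) (hcd : c < d)
    (hne : (a, b) ≠ (c, d)) : ¬ (X a - X b : Pol n) ∣ (X c - X d) := by
  intro hdvd
  have hset : c ∉ ({a, b} : Set (Fin n)) ∨ d ∉ ({a, b} : Set (Fin n)) := by
    by_contra hcon
    push_neg at hcon
    obtain ⟨hc, hd⟩ := hcon
    simp only [Set.mem_insert_iff, Set.mem_singleton_iff] at hc hd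
    apply hne
    rcases hc with rfl | rfl <;> rcases hd with rfl | rfl
    · exact absurd hcd (lt_irrefl _)
    · rfl
    · exact absurd (hab.trans hcd) (lt_irrefl _)
    · exact absurd hcd (lt_irrefl _)
  obtain ⟨g, hg⟩ := hdvd
  rcases hset with hc | hd
  · simp only [Set.mem_insert_iff, Set.mem_singleton_iff, not_or] at hc
    have := congrArg (eval (fun x => if x = c then (1 : ℂ) else 0)) hg
    simp only [eval_sub, eval_X, eval_mul] at this
    have h1 : d ≠ c := (Fin.ne_of_lt hcd).symm
    have h2 : a ≠ c := fun h => hc.1 h.symm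
    have h3 : b ≠ c := fun h => hc.2 h.symm
    simp [h1, h2, h3] at this
  · simp only [Set.mem_insert_iff, Set.mem_singleton_iff, not_or] at hd
    have := congrArg (eval (fun x => if x = d then (1 : ℂ) else 0)) hg
    simp only [eval_sub, eval_X, eval_mul] at this
    have h1 : c ≠ d := Fin.ne_of_lt hcd
    have h2 : a ≠ d := fun h => hd.1 h.symm
    have h3 : b ≠ d := fun h => hd.2 h.symm
    simp [h1, h2, h3] at this

lemma prod_pairs_dvd (S : Finset (Fin n × Fin n)) (hS : ∀ q ∈ S, q.1 < q.2) (f : Pol n)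
    (hdvd : ∀ q ∈ S, (X q.1 - X q.2 : Pol n) ∣ f) :
    (∏ q ∈ S, (X q.1 - X q.2 : Pol n)) ∣ f := by
  classical
  induction S using Finset.induction_on generalizing f with
  | empty => simp
  | @insert q₀ s hq ih =>
    obtain ⟨g, hg⟩ := hdvd q₀ (Finset.mem_insert_self _ _)
    have hrest : ∀ q ∈ s, (X q.1 - X q.2 : Pol n) ∣ g := by
      intro q hqs
      have hd : (X q.1 - X q.2 : Pol n) ∣ (X q₀.1 - X q₀.2) * g := by
        rw [← hg]; exact hdvd q (Finset.mem_insert_of_mem hqs)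
      have hp := prime_X_sub_X (Fin.ne_of_lt (hS q (Finset.mem_insert_of_mem hqs)))
      rcases hp.dvd_or_dvd hd with h | h
      · exfalso
        refine not_dvd_X_sub_X (hS q (Finset.mem_insert_of_mem hqs))
          (hS q₀ (Finset.mem_insert_self _ _)) ?_ h
        intro he
        rw [Prod.ext_iff] at he
        obtain ⟨e1, e2⟩ := he
        apply hq
        have : q = q₀ := Prod.ext e1 e2
        rwa [← this]
      · exact h
    have := ih (fun q hqs => hS q (Finset.mem_insert_of_mem hqs)) g hrest
    rw [Finset.prod_insert hq, hg]
    exact mul_dvd_mul_left _ this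

end PrimeLemmas

section HomogDiv
variable {n : ℕ}

lemma homog_of_mul_homog {P g : Pol n} {m d : ℕ}
    (hP : P.IsHomogeneous m) (hP0 : P ≠ 0) (h : (P * g).IsHomogeneous d) :
    g.IsHomogeneous (d - m) ∧ (g ≠ 0 → m ≤ d) := by
  classical
  by_cases hg : g = 0
  · subst hg
    exact ⟨isHomogeneous_zero _ _ _, fun h0 => absurd rfl h0⟩
  have key : ∀ k, m + k ≠ d → homogeneousComponent k g = 0 := by
    intro k hk
    by_cases hbig : g.totalDegree < k
    · exact homogeneousComponent_eq_zero _ _ hbig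
    have hsplit : P * g = ∑ j ∈ Finset.range (g.totalDegree + 1),
        P * homogeneousComponent j g := by
      rw [← Finset.mul_sum, sum_homogeneousComponent]
    have h1 : homogeneousComponent (m + k) (P * g) = 0 := by
      rw [homogeneousComponent_of_mem ((mem_homogeneousSubmodule _ _).mpr h)]
      simp [hk]
    rw [hsplit, map_sum] at h1
    have h2 : ∀ j ∈ Finset.range (g.totalDegree + 1),
        homogeneousComponent (m + k) (P * homogeneousComponent j g)
          = if j = k then P * homogeneousComponent j g else 0 := by
      intro j _
      rw [homogeneousComponent_of_mem (n := m + j) ((mem_homogeneousSubmodule _ _).mpr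
        (hP.mul (homogeneousComponent_isHomogeneous j g)))]
      exact if_congr (by omega) rfl rfl
    rw [Finset.sum_congr rfl h2, Finset.sum_ite_eq' _ k
      (fun j => P * homogeneousComponent j g)] at h1
    rw [if_pos (by rw [Finset.mem_range]; omega)] at h1
    rcases mul_eq_zero.mp h1 with h' | h'
    · exact absurd h' hP0
    · exact h'
  have hm : m ≤ d := by
    by_contra hmd
    apply hg
    rw [← sum_homogeneousComponent g]
    refine Finset.sum_eq_zero fun k _ => key k (by omega)
  refine ⟨?_, fun _ => hm⟩
  have hgeq : g = homogeneousComponent (d - m) g := by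
    conv_lhs => rw [← sum_homogeneousComponent g]
    rw [Finset.sum_eq_single (d - m)]
    · intro j _ hj
      exact key j (by omega)
    · intro hnot
      rw [Finset.mem_range] at hnot
      exact homogeneousComponent_eq_zero _ _ (by omega)
  rw [hgeq]
  exact homogeneousComponent_isHomogeneous _ _

end HomogDiv

section Vanish
variable {n : ℕ}

lemma gkm_vanish {d : ℕ} {q : Perm (Fin n) → Pol n} (hq : GKM n q)
    (hhom : ∀ v, (q v).IsHomogeneous d) (hz : ∀ v, len v ≤ d → q v = 0) :
    ∀ v, q v = 0 := by
  suffices H : ∀ m (v : Perm (Fin n)), len v = m → q v = 0 by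
    exact fun v => H (len v) v rfl
  intro m
  induction m using Nat.strong_induction_on with
  | _ m IH =>
    intro v hv
    by_cases hm : len v ≤ d
    · exact hz v hm
    push_neg at hm
    have hdvd : ∀ p ∈ invSet v⁻¹, (X p.1 - X p.2 : Pol n) ∣ q v := by
      intro p hp
      rw [mem_invSet] at hp
      have hlow : len (Equiv.swap p.1 p.2 * v) < len v := (len_swap_lt_iff hp.1 v).mpr hp.2
      have hzero : q (Equiv.swap p.1 p.2 * v) = 0 := IH _ (by omega) _ rfl
      have hdd := hq v p.1 p.2 hp.1
      rwa [hzero, sub_zero] at hdd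
    have hprod := prod_pairs_dvd (invSet v⁻¹) (fun p hp => (mem_invSet.mp hp).1) (q v) hdvd
    by_contra h0
    obtain ⟨g, hg⟩ := hprod
    have hPhom : (∏ p ∈ invSet v⁻¹, (X p.1 - X p.2 : Pol n)).IsHomogeneous
        (invSet v⁻¹).card := by
      have h := IsHomogeneous.prod (invSet v⁻¹)
        (fun p => (X p.1 - X p.2 : Pol n)) (fun _ => 1)
        (fun p _ => (isHomogeneous_X _ p.1).sub (isHomogeneous_X _ p.2))
      simpa using h
    have hP0 : (∏ p ∈ invSet v⁻¹, (X p.1 - X p.2 : Pol n)) ≠ 0 :=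
      Finset.prod_ne_zero_iff.mpr fun p hp =>
        X_sub_X_ne_zero (Fin.ne_of_lt (mem_invSet.mp hp).1)
    have hcard : (invSet v⁻¹).card = len v := by rw [← len_eq_card, len_inv]
    have hg0 : g ≠ 0 := by
      intro h'
      rw [h', mul_zero] at hg
      exact h0 hg
    have hmul : ((∏ p ∈ invSet v⁻¹, (X p.1 - X p.2 : Pol n)) * g).IsHomogeneous d := by
      rw [← hg]; exact hhom v
    have := (homog_of_mul_homog hPhom hP0 hmul).2 hg0
    omega

end Vanish

section ProdLemmas
variable {n : ℕ}

lemma prod_left {i j : Fin n} (hij : (j : ℕ) = (i : ℕ) + 1) {w : Perm (Fin n)}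
    (hlow : w⁻¹ j < w⁻¹ i) :
    rename ⇑(Equiv.swap i j) (∏ q ∈ invSet w⁻¹, (X q.1 - X q.2 : Pol n))
      = -((X i - X j) * ∏ q ∈ invSet (Equiv.swap i j * w)⁻¹, (X q.1 - X q.2 : Pol n)) := by
  have hijlt : i < j := by rw [Fin.lt_def]; omega
  set s := Equiv.swap i j with hs
  have hmem : (i, j) ∈ invSet w⁻¹ := mem_invSet.mpr ⟨hijlt, hlow⟩
  rw [map_prod]
  have hterm : ∀ q : Fin n × Fin n,
      rename ⇑s (X q.1 - X q.2 : Pol n) = X (s q.1) - X (s q.2) := by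
    intro q; rw [map_sub, rename_X, rename_X]
  rw [Finset.prod_congr rfl (fun q _ => hterm q)]
  rw [← Finset.mul_prod_erase _ _ hmem]
  have hbij : (∏ q ∈ (invSet w⁻¹).erase (i, j), (X (s q.1) - X (s q.2) : Pol n))
      = ∏ q ∈ invSet (s * w)⁻¹, (X q.1 - X q.2 : Pol n) := by
    refine Finset.prod_nbij' (fun q => (s q.1, s q.2)) (fun q => (s q.1, s q.2))
      ?_ ?_ ?_ ?_ ?_
    · intro q hq
      rw [Finset.mem_erase, mem_invSet] at hq
      obtain ⟨hne, hq1, hq2⟩ := hq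
      rw [mem_invSet]
      have h1 : ¬(q.1 = i ∧ q.2 = j) := by
        rintro ⟨e1, e2⟩; exact hne (Prod.ext e1 e2)
      have h2 : ¬(q.1 = j ∧ q.2 = i) := by
        rintro ⟨e1, e2⟩
        rw [e1, e2] at hq1
        exact absurd (hijlt.trans hq1) (lt_irrefl _)
      refine ⟨(swap_lt_swap_iff hij h1 h2).mpr hq1, ?_⟩
      rw [mul_inv_rev]
      simp only [Equiv.Perm.mul_apply]
      rw [hs, Equiv.swap_inv, ← hs, Equiv.swap_apply_self, Equiv.swap_apply_self]
      exact hq2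
    · intro q hq
      rw [mem_invSet] at hq
      obtain ⟨hq1, hq2⟩ := hq
      rw [mul_inv_rev] at hq2
      simp only [Equiv.Perm.mul_apply] at hq2
      rw [hs, Equiv.swap_inv, ← hs] at hq2
      rw [Finset.mem_erase, mem_invSet]
      have h1 : ¬(q.1 = i ∧ q.2 = j) := by
        rintro ⟨e1, e2⟩
        rw [e1, e2] at hq2
        rw [Equiv.swap_apply_left, Equiv.swap_apply_right] at hq2
        exact absurd (hq2.trans hlow) (lt_irrefl _)
      have h2 : ¬(q.1 = j ∧ q.2 = i) := by
        rintro ⟨e1, e2⟩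
        rw [e1, e2] at hq1
        exact absurd (hijlt.trans hq1) (lt_irrefl _)
      refine ⟨?_, (swap_lt_swap_iff hij h1 h2).mpr hq1, hq2⟩
      intro he
      rw [Prod.ext_iff] at he
      obtain ⟨e1, e2⟩ := he
      dsimp only at e1 e2
      have e1' : q.1 = s i := by rw [← e1, hs, Equiv.swap_apply_self]
      have e2' : q.2 = s j := by rw [← e2, hs, Equiv.swap_apply_self]
      rw [hs, Equiv.swap_apply_left] at e1'
      rw [hs, Equiv.swap_apply_right] at e2'
      rw [e1', e2'] at hq1
      exact absurd (hijlt.trans hq1) (lt_irrefl _)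
    · intro q _; simp [hs, Equiv.swap_apply_self]
    · intro q _; simp [hs, Equiv.swap_apply_self]
    · intro q _; simp [hs, Equiv.swap_apply_self]
  rw [hbij]
  have : (X (s i) - X (s j) : Pol n) = -(X i - X j) := by
    rw [hs, Equiv.swap_apply_left, Equiv.swap_apply_right]; ring
  rw [this, neg_mul]

lemma prod_right {i j : Fin n} (hij : (j : ℕ) = (i : ℕ) + 1) {w : Perm (Fin n)}
    (hlow : w j < w i) :
    (∏ q ∈ invSet w⁻¹, (X q.1 - X q.2 : Pol n))
      = (X (w j) - X (w i)) *
        ∏ q ∈ invSet (w * Equiv.swap i j)⁻¹, (X q.1 - X q.2 : Pol n) := by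
  have hijlt : i < j := by rw [Fin.lt_def]; omega
  set s := Equiv.swap i j with hs
  have hmem : (w j, w i) ∈ invSet w⁻¹ := by
    rw [mem_invSet]
    constructor
    · exact hlow
    · simp only [Equiv.Perm.coe_inv, Equiv.symm_apply_apply]
      exact hijlt
  have hset : invSet (w * s)⁻¹ = (invSet w⁻¹).erase (w j, w i) := by
    ext q
    rw [mem_invSet, Finset.mem_erase, mem_invSet]
    constructor
    · rintro ⟨hq1, hq2⟩
      rw [mul_inv_rev] at hq2
      simp only [Equiv.Perm.mul_apply] at hq2
      rw [hs, Equiv.swap_inv, ← hs] at hq2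
      have h1 : ¬(w⁻¹ q.2 = i ∧ w⁻¹ q.1 = j) := by
        rintro ⟨e1, e2⟩
        rw [e1, e2, Equiv.swap_apply_left, Equiv.swap_apply_right] at hq2
        rw [Fin.lt_def] at hq2; omega
      have h2 : ¬(w⁻¹ q.2 = j ∧ w⁻¹ q.1 = i) := by
        rintro ⟨e1, e2⟩
        have hq1' : q.1 = w i := by rw [← e2, Equiv.Perm.coe_inv, Equiv.apply_symm_apply]
        have hq2' : q.2 = w j := by rw [← e1, Equiv.Perm.coe_inv, Equiv.apply_symm_apply]
        rw [hq1', hq2'] at hq1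
        exact absurd (hq1.trans hlow) (lt_irrefl _)
      refine ⟨?_, hq1, (swap_lt_swap_iff hij h1 h2).mp hq2⟩
      intro he
      rw [Prod.ext_iff] at he
      obtain ⟨e1, e2⟩ := he
      apply h1
      constructor
      · rw [e2]; simp
      · rw [e1]; simp
    · rintro ⟨hne, hq1, hq2⟩
      refine ⟨hq1, ?_⟩
      rw [mul_inv_rev]
      simp only [Equiv.Perm.mul_apply]
      rw [hs, Equiv.swap_inv, ← hs]
      have h1 : ¬(w⁻¹ q.2 = i ∧ w⁻¹ q.1 = j) := by
        rintro ⟨e1, e2⟩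
        apply hne
        have hq1' : q.1 = w j := by rw [← e2, Equiv.Perm.coe_inv, Equiv.apply_symm_apply]
        have hq2' : q.2 = w i := by rw [← e1, Equiv.Perm.coe_inv, Equiv.apply_symm_apply]
        exact Prod.ext hq1' hq2'
      have h2 : ¬(w⁻¹ q.2 = j ∧ w⁻¹ q.1 = i) := by
        rintro ⟨e1, e2⟩
        have hq1' : q.1 = w i := by rw [← e2, Equiv.Perm.coe_inv, Equiv.apply_symm_apply]
        have hq2' : q.2 = w j := by rw [← e1, Equiv.Perm.coe_inv, Equiv.apply_symm_apply]
        rw [hq1', hq2'] at hq1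
        exact absurd (hq1.trans hlow) (lt_irrefl _)
      exact (swap_lt_swap_iff hij h1 h2).mpr hq2
  rw [hset, ← Finset.mul_prod_erase _ _ hmem]

end ProdLemmas

section Misc
variable {n : ℕ}

lemma GKM_sub {p q : Perm (Fin n) → Pol n} (hp : GKM n p) (hq : GKM n q) :
    GKM n (fun v => p v - q v) := by
  intro v a b hab
  have h := dvd_sub (hp v a b hab) (hq v a b hab)
  have he : p v - p (Equiv.swap a b * v) - (q v - q (Equiv.swap a b * v))
      = p v - q v - (p (Equiv.swap a b * v) - q (Equiv.swap a b * v)) := by ring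
  rwa [he] at h

lemma len_swap_mul_le {i j : Fin n} (hij : (j : ℕ) = (i : ℕ) + 1) (v : Perm (Fin n)) :
    len (Equiv.swap i j * v) ≤ len v + 1 := by
  have h := len_adj_left hij v
  have hne : v⁻¹ i ≠ v⁻¹ j := fun h' => by
    have := v⁻¹.injective h'
    rw [Fin.ext_iff] at this
    omega
  rcases lt_or_gt_of_ne hne with h' | h'
  · rw [h.1 h']
  · have := h.2 h'
    omega

lemma len_mul_swap_le {i j : Fin n} (hij : (j : ℕ) = (i : ℕ) + 1) (v : Perm (Fin n)) :
    len (v * Equiv.swap i j) ≤ len v + 1 := by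
  have h := len_adj_right hij v
  have hne : v i ≠ v j := fun h' => by
    have := v.injective h'
    rw [Fin.ext_iff] at this
    omega
  rcases lt_or_gt_of_ne hne with h' | h'
  · rw [h.1 h']
  · have := h.2 h'
    omega

lemma homog0_eq_C {p : Pol n} (hp : p.IsHomogeneous 0) : p = C (coeff 0 p) := by
  ext m
  rw [coeff_C]
  by_cases hm : m = 0
  · subst hm; simp
  · rw [if_neg (Ne.symm hm)]
    by_contra hne
    have hdeg := hp hne
    apply hm
    rw [← Finsupp.degree_eq_zero_iff m, Finsupp.degree_eq_weight_one]
    exact hdeg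

lemma diff_zero_of_homog0 {a b : Pol n} {c : Fin n × Fin n} (hc : c.1 < c.2)
    (ha : a.IsHomogeneous 0) (hb : b.IsHomogeneous 0)
    (hdvd : (X c.1 - X c.2 : Pol n) ∣ a - b) : a = b := by
  obtain ⟨g, hg⟩ := hdvd
  by_cases hab : a - b = 0
  · exact sub_eq_zero.mp hab
  · exfalso
    have hghom : ((X c.1 - X c.2 : Pol n) * g).IsHomogeneous 0 := by
      rw [← hg]; exact ha.sub hb
    have hg0 : g ≠ 0 := by
      intro h'
      rw [h', mul_zero] at hg
      exact hab hg
    have := (homog_of_mul_homog ((isHomogeneous_X _ c.1).sub (isHomogeneous_X _ c.2))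
        (X_sub_X_ne_zero (Fin.ne_of_lt hc)) hghom).2 hg0
    omega

end Misc

section MainAux
variable {n : ℕ}

lemma main_left {i j : Fin n} (hij : (j : ℕ) = (i : ℕ) + 1)
    (pw : Perm (Fin n) → Perm (Fin n) → Pol n) (hpw : ∀ w, IsCanonical w (pw w))
    (D : Perm (Fin n) → Pol n) (w : Perm (Fin n)) (hGD : GKM n D)
    (hD : ∀ v, pw w v - rename ⇑(Equiv.swap i j) (pw w (Equiv.swap i j * v))
        = (X i - X j) * D v) :
    (len (Equiv.swap i j * w) < len w → D = pw (Equiv.swap i j * w)) ∧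
    (¬ len (Equiv.swap i j * w) < len w → D = 0) := by
  have hijlt : i < j := by rw [Fin.lt_def]; omega
  obtain ⟨hgw, hhw, hzw, hvw⟩ := hpw w
  have hXne : (X i - X j : Pol n) ≠ 0 := X_sub_X_ne_zero (Fin.ne_of_lt hijlt)
  have hXhom : (X i - X j : Pol n).IsHomogeneous 1 :=
    (isHomogeneous_X _ i).sub (isHomogeneous_X _ j)
  have hDhom : ∀ v, (D v).IsHomogeneous (len w - 1) := by
    intro v
    have hnum : (pw w v - rename ⇑(Equiv.swap i j)
        (pw w (Equiv.swap i j * v))).IsHomogeneous (len w) :=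
      (hhw v).sub ((hhw _).rename_isHomogeneous)
    rw [hD v] at hnum
    exact (homog_of_mul_homog hXhom hXne hnum).1
  constructor
  · intro hlow
    have hcond : w⁻¹ j < w⁻¹ i := (len_swap_lt_iff hijlt w).mp hlow
    have hlen1 : len (Equiv.swap i j * w) + 1 = len w := (len_adj_left hij w).2 hcond
    obtain ⟨hgsw, hhsw, hzsw, hvsw⟩ := hpw (Equiv.swap i j * w)
    have hvan : ∀ v, len v ≤ len w - 1 → D v - pw (Equiv.swap i j * w) v = 0 := by
      intro v hv
      by_cases hveq : v = Equiv.swap i j * w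
      · subst hveq
        have hswsw : Equiv.swap i j * (Equiv.swap i j * w) = w := by
          rw [← mul_assoc, Equiv.swap_mul_self, one_mul]
        have h0 : pw w (Equiv.swap i j * w) = 0 := by
          refine hzw _ (not_bruhat_of_len_le (by omega) ?_)
          intro h; rw [h] at hlen1; omega
        have heq := hD (Equiv.swap i j * w)
        rw [hswsw, h0, hvw, lowering_eq, zero_sub, prod_left hij hcond, neg_neg] at heq
        have hfin := mul_left_cancel₀ hXne heq
        rw [hvsw, lowering_eq, ← hfin, sub_self]
      · have hEv : pw (Equiv.swap i j * w) v = 0 :=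
          hzsw v (not_bruhat_of_len_le (by omega) hveq)
        have hAv : pw w v = 0 := by
          refine hzw v (not_bruhat_of_len_le (by omega) ?_)
          intro h; rw [h] at hv; omega
        have hBv : pw w (Equiv.swap i j * v) = 0 := by
          refine hzw _ (not_bruhat_of_len_le ?_ ?_)
          · have := len_swap_mul_le hij v; omega
          · intro h
            apply hveq
            rw [← h, ← mul_assoc, Equiv.swap_mul_self, one_mul]
        have heq := hD v
        rw [hAv, hBv, map_zero, sub_zero] at heq
        have hDv : D v = 0 := (mul_eq_zero.mp heq.symm).resolve_left hXne
        rw [hEv, hDv, sub_zero]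
    have hlsw : len (Equiv.swap i j * w) = len w - 1 := by omega
    have hz := gkm_vanish (GKM_sub hGD hgsw)
      (fun v => (hDhom v).sub (hlsw ▸ hhsw v)) hvan
    funext v
    exact sub_eq_zero.mp (hz v)
  · intro hnot
    have hn2 : len w ≤ len (Equiv.swap i j * w) := not_lt.mp hnot
    by_cases hl0 : len w = 0
    · funext v
      have hdiff : pw w v = pw w (Equiv.swap i j * v) :=
        diff_zero_of_homog0 (c := (i, j)) hijlt (by rw [← hl0]; exact hhw v)
          (by rw [← hl0]; exact hhw _) (hgw v i j hijlt)
      have hren : rename ⇑(Equiv.swap i j) (pw w (Equiv.swap i j * v))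
          = pw w (Equiv.swap i j * v) := by
        rw [homog0_eq_C (p := pw w (Equiv.swap i j * v)) (by rw [← hl0]; exact hhw _),
          rename_C]
      have heq := hD v
      rw [hren, ← hdiff, sub_self] at heq
      exact ((mul_eq_zero.mp heq.symm).resolve_left hXne)
    · have hvan : ∀ v, len v ≤ len w - 1 → D v = 0 := by
        intro v hv
        have hAv : pw w v = 0 := by
          refine hzw v (not_bruhat_of_len_le (by omega) ?_)
          intro h; rw [h] at hv; omega
        have hBv : pw w (Equiv.swap i j * v) = 0 := by
          refine hzw _ (not_bruhat_of_len_le ?_ ?_)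
          · have := len_swap_mul_le hij v; omega
          · intro h
            have hv' : v = Equiv.swap i j * w := by
              rw [← h, ← mul_assoc, Equiv.swap_mul_self, one_mul]
            rw [hv'] at hv
            omega
        have heq := hD v
        rw [hAv, hBv, map_zero, sub_zero] at heq
        exact ((mul_eq_zero.mp heq.symm).resolve_left hXne)
      have hz := gkm_vanish hGD hDhom hvan
      funext v
      exact hz v

end MainAux

section MainAuxR
variable {n : ℕ}

lemma main_right {i j : Fin n} (hij : (j : ℕ) = (i : ℕ) + 1)
    (pw : Perm (Fin n) → Perm (Fin n) → Pol n) (hpw : ∀ w, IsCanonical w (pw w))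
    (D : Perm (Fin n) → Pol n) (w : Perm (Fin n)) (hGD : GKM n D)
    (hD : ∀ v, pw w v - pw w (v * Equiv.swap i j)
        = (X (v j) - X (v i)) * D v) :
    (len (w * Equiv.swap i j) < len w → D = pw (w * Equiv.swap i j)) ∧
    (¬ len (w * Equiv.swap i j) < len w → D = 0) := by
  have hijlt : i < j := by rw [Fin.lt_def]; omega
  obtain ⟨hgw, hhw, hzw, hvw⟩ := hpw w
  have hvne : ∀ v : Perm (Fin n), v j ≠ v i := by
    intro v h
    have h2 := v.injective h
    rw [Fin.ext_iff] at h2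
    omega
  have hXne : ∀ v : Perm (Fin n), (X (v j) - X (v i) : Pol n) ≠ 0 :=
    fun v => X_sub_X_ne_zero (hvne v)
  have hDhom : ∀ v, (D v).IsHomogeneous (len w - 1) := by
    intro v
    have hnum : (pw w v - pw w (v * Equiv.swap i j)).IsHomogeneous (len w) :=
      (hhw v).sub (hhw _)
    rw [hD v] at hnum
    exact (homog_of_mul_homog ((isHomogeneous_X _ _).sub (isHomogeneous_X _ _))
      (hXne v) hnum).1
  constructor
  · intro hlow
    have hcond : w j < w i := by
      rcases lt_or_gt_of_ne (hvne w) with h | h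
      · exact h
      · exfalso
        have := (len_adj_right hij w).1 h
        omega
    have hlen1 : len (w * Equiv.swap i j) + 1 = len w := (len_adj_right hij w).2 hcond
    obtain ⟨hgws, hhws, hzws, hvws⟩ := hpw (w * Equiv.swap i j)
    have hvan : ∀ v, len v ≤ len w - 1 → D v - pw (w * Equiv.swap i j) v = 0 := by
      intro v hv
      by_cases hveq : v = w * Equiv.swap i j
      · subst hveq
        have hback : w * Equiv.swap i j * Equiv.swap i j = w := by
          rw [mul_assoc, Equiv.swap_mul_self, mul_one]
        have h0 : pw w (w * Equiv.swap i j) = 0 := by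
          refine hzw _ (not_bruhat_of_len_le (by omega) ?_)
          intro h; rw [h] at hlen1; omega
        have heq := hD (w * Equiv.swap i j)
        rw [hback, h0, hvw, lowering_eq, zero_sub, prod_right hij hcond] at heq
        have ha : (w * Equiv.swap i j) j = w i := by
          simp [Equiv.Perm.mul_apply, Equiv.swap_apply_right]
        have hb : (w * Equiv.swap i j) i = w j := by
          simp [Equiv.Perm.mul_apply, Equiv.swap_apply_left]
        rw [ha, hb] at heq
        have heq2 : (X (w i) - X (w j) : Pol n) *
            (∏ q ∈ invSet (w * Equiv.swap i j)⁻¹, (X q.1 - X q.2 : Pol n))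
            = (X (w i) - X (w j)) * D (w * Equiv.swap i j) := by
          rw [← heq]; ring
        have hfin := mul_left_cancel₀ (X_sub_X_ne_zero (Ne.symm (hvne w))) heq2
        rw [hvws, lowering_eq, ← hfin, sub_self]
      · have hEv : pw (w * Equiv.swap i j) v = 0 :=
          hzws v (not_bruhat_of_len_le (by omega) hveq)
        have hAv : pw w v = 0 := by
          refine hzw v (not_bruhat_of_len_le (by omega) ?_)
          intro h; rw [h] at hv; omega
        have hBv : pw w (v * Equiv.swap i j) = 0 := by
          refine hzw _ (not_bruhat_of_len_le ?_ ?_)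
          · have := len_mul_swap_le hij v; omega
          · intro h
            apply hveq
            rw [← h, mul_assoc, Equiv.swap_mul_self, mul_one]
        have heq := hD v
        rw [hAv, hBv, sub_zero] at heq
        have hDv : D v = 0 := (mul_eq_zero.mp heq.symm).resolve_left (hXne v)
        rw [hEv, hDv, sub_zero]
    have hlsw : len (w * Equiv.swap i j) = len w - 1 := by omega
    have hz := gkm_vanish (GKM_sub hGD hgws)
      (fun v => (hDhom v).sub (hlsw ▸ hhws v)) hvan
    funext v
    exact sub_eq_zero.mp (hz v)
  · intro hnot
    have hn2 : len w ≤ len (w * Equiv.swap i j) := not_lt.mp hnot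
    by_cases hl0 : len w = 0
    · funext v
      have hkey : v * Equiv.swap i j = Equiv.swap (v i) (v j) * v := by
        rw [Equiv.swap_apply_apply]
        group
      have hdvd : ∃ c : Fin n × Fin n, c.1 < c.2 ∧
          ((X c.1 - X c.2 : Pol n) ∣ pw w v - pw w (v * Equiv.swap i j)) := by
        rcases lt_or_gt_of_ne (Ne.symm (hvne v)) with h | h
        · exact ⟨(v i, v j), h, by rw [hkey]; exact hgw v (v i) (v j) h⟩
        · refine ⟨(v j, v i), h, ?_⟩
          rw [hkey, Equiv.swap_comm]
          exact hgw v (v j) (v i) h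
      obtain ⟨c, hc1, hc2⟩ := hdvd
      have hdiff : pw w v = pw w (v * Equiv.swap i j) :=
        diff_zero_of_homog0 hc1 (by rw [← hl0]; exact hhw v)
          (by rw [← hl0]; exact hhw _) hc2
      have heq := hD v
      rw [← hdiff, sub_self] at heq
      exact ((mul_eq_zero.mp heq.symm).resolve_left (hXne v))
    · have hvan : ∀ v, len v ≤ len w - 1 → D v = 0 := by
        intro v hv
        have hAv : pw w v = 0 := by
          refine hzw v (not_bruhat_of_len_le (by omega) ?_)
          intro h; rw [h] at hv; omega
        have hBv : pw w (v * Equiv.swap i j) = 0 := by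
          refine hzw _ (not_bruhat_of_len_le ?_ ?_)
          · have := len_mul_swap_le hij v; omega
          · intro h
            have hv' : v = w * Equiv.swap i j := by
              rw [← h, mul_assoc, Equiv.swap_mul_self, mul_one]
            rw [hv'] at hv
            omega
        have heq := hD v
        rw [hAv, hBv, sub_zero] at heq
        exact ((mul_eq_zero.mp heq.symm).resolve_left (hXne v))
      have hz := gkm_vanish hGD hDhom hvan
      funext v
      exact hz v

end MainAuxR


/-- `δᵢ p_w = p_{sᵢw}` if `ℓ(sᵢw) < ℓ(w)` and `δᵢ p_w = 0` otherwise;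
`∂ᵢ p_w = p_{wsᵢ}` if `ℓ(wsᵢ) < ℓ(w)` and `∂ᵢ p_w = 0` otherwise.  Here `Dl i = δᵢ`
and `Dr i = ∂ᵢ` are given with their componentwise defining equations. -/
theorem divided_difference_on_schubert_class (n : ℕ) (hn : 1 ≤ n)
    (pw : Perm (Fin n) → Perm (Fin n) → Pol n)
    (hpw : ∀ w, IsCanonical w (pw w))
    (Dl Dr : ∀ i : ℕ, i + 1 < n → (Perm (Fin n) → Pol n) → (Perm (Fin n) → Pol n))
    (hDl : ∀ (i : ℕ) (hi : i + 1 < n) (p), GKM n p → GKM n (Dl i hi p) ∧ ∀ v,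
        p v - pact (sT n i hi) (p (sT n i hi * v))
          = (X ⟨i, by omega⟩ - X ⟨i + 1, hi⟩ : Pol n) * Dl i hi p v)
    (hDr : ∀ (i : ℕ) (hi : i + 1 < n) (p), GKM n p → GKM n (Dr i hi p) ∧ ∀ v,
        p v - p (v * sT n i hi)
          = (X (v ⟨i + 1, hi⟩) - X (v ⟨i, by omega⟩) : Pol n) * Dr i hi p v)
    (w : Perm (Fin n)) (i : ℕ) (hi : i + 1 < n) :
    (len (sT n i hi * w) < len w → Dl i hi (pw w) = pw (sT n i hi * w)) ∧
    (¬ len (sT n i hi * w) < len w → Dl i hi (pw w) = 0) ∧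
    (len (w * sT n i hi) < len w → Dr i hi (pw w) = pw (w * sT n i hi)) ∧
    (¬ len (w * sT n i hi) < len w → Dr i hi (pw w) = 0) := by
  have hij : ((⟨i + 1, hi⟩ : Fin n) : ℕ) = ((⟨i, by omega⟩ : Fin n) : ℕ) + 1 := rfl
  have hGl := (hDl i hi (pw w) (hpw w).1).1
  have hEl := (hDl i hi (pw w) (hpw w).1).2
  have hGr := (hDr i hi (pw w) (hpw w).1).1
  have hEr := (hDr i hi (pw w) (hpw w).1).2
  have hL := main_left (i := ⟨i, by omega⟩) (j := ⟨i + 1, hi⟩) hij pw hpw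
    (Dl i hi (pw w)) w hGl hEl
  have hR := main_right (i := ⟨i, by omega⟩) (j := ⟨i + 1, hi⟩) hij pw hpw
    (Dr i hi (pw w)) w hGr hEr
  exact ⟨hL.1, hL.2, hR.1, hR.2⟩
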